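/- For every Nash equilibrium S* of the game Γ_n and every gadget index 0 ≤ i < n, the congestions are uniquely determined: n_{i,0}(S*) = 3n and n_{i,1}(S*) = n_{i,2}(S*) = n. -/

import Mathlib

/-- A state of the game `Γ_n`: `s i j k` is the strategy played by the `k`-th type-`j`
player of gadget `G_i` (`false` = 0-strategy, `true` = 1-strategy). -/
abbrev GState (n : ℕ) := Fin n → Fin 5 → Fin n → Bool

/-- `cb s b i j` = the number `c^b_{i,j}(s)` of type-`j` players of gadget `G_i`
playing their `b`-strategy in state `s`. -/
def cb {n : ℕ} (s : GState n) (b : Bool) (i : Fin n) (j : Fin 5) : ℕ :=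
  (Finset.univ.filter fun k => s i j k = b).card

/-- Congestion `n_{i,0}(s)` of resource `r_{i,0}` (which coincides with `r_{i-1,3}`):
it is allocated by the type-0, type-2 and type-4 players of `G_i` playing their
0-strategy and the type-1, type-3 and type-4 players of `G_{i-1}` playing their
1-strategy. -/
def congR0 {n : ℕ} [NeZero n] (s : GState n) (i : Fin n) : ℕ :=
  cb s false i 0 + cb s false i 2 + cb s false i 4 +
    cb s true (i - 1) 1 + cb s true (i - 1) 3 + cb s true (i - 1) 4

/-- Congestion `n_{i,1}(s)` of resource `r_{i,1}`. -/
def congR1 {n : ℕ} (s : GState n) (i : Fin n) : ℕ := cb s true i 0 + cb s false i 1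

/-- Congestion `n_{i,2}(s)` of resource `r_{i,2}`. -/
def congR2 {n : ℕ} (s : GState n) (i : Fin n) : ℕ := cb s true i 2 + cb s false i 3

/-- The thresholds `t_0 = 3n`, `t_1 = n-1`, `t_2 = 3n-2`, `t_3 = n-1`, `t_4 = 3n-1`. -/
def threshold (n : ℕ) : Fin 5 → ℕ := ![3 * n, n - 1, 3 * n - 2, n - 1, 3 * n - 1]

/-- The congestion of the 0-strategy resource of a type-`j` player of gadget `G_i`
(`r_{i,0}` for types 0, 2, 4; `r_{i,1}` for type 1; `r_{i,2}` for type 3). -/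
def res0cong {n : ℕ} [NeZero n] (s : GState n) (i : Fin n) : Fin 5 → ℕ :=
  ![congR0 s i, congR1 s i, congR0 s i, congR2 s i, congR0 s i]

/-- `s` is a Nash equilibrium of `Γ_n`: every player plays its best response, where the
0-strategy of a type-`j` player is its (unique) best response iff the number of *other*
players allocating its 0-strategy resource is at most `threshold n j`, and otherwise its
1-strategy is its best response. -/
def IsNashG {n : ℕ} [NeZero n] (s : GState n) : Prop :=
  ∀ (i : Fin n) (j : Fin 5) (k : Fin n),
    (s i j k = false → res0cong s i j - 1 ≤ threshold n j) ∧
    (s i j k = true → threshold n j < res0cong s i j)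

/-- For every Nash equilibrium of `Γ_n` and every gadget index `i`, the
congestions are uniquely determined: `n_{i,0} = 3n` and `n_{i,1} = n_{i,2} = n`. -/
lemma cb_add {n : ℕ} (s : GState n) (i : Fin n) (j : Fin 5) :
    cb s false i j + cb s true i j = n := by
  classical
  have h := Finset.card_filter_add_card_filter_not
    (s := (Finset.univ : Finset (Fin n))) (p := fun k => s i j k = false)
  simp only [Finset.card_univ, Fintype.card_fin, Bool.not_eq_false] at h
  simpa [cb] using h

lemma cb_exists {n : ℕ} (s : GState n) (b : Bool) (i : Fin n) (j : Fin 5)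
    (h : cb s b i j ≠ 0) : ∃ k, s i j k = b := by
  classical
  obtain ⟨k, hk⟩ := Finset.card_ne_zero.mp h
  exact ⟨k, (Finset.mem_filter.mp hk).2⟩

theorem gadget_nash_unique_congestions
    (n : ℕ) [NeZero n] (hn : 2 ≤ n) (heven : Even n)
    (s : GState n) (hnash : IsNashG s) :
    ∀ i : Fin n, congR0 s i = 3 * n ∧ congR1 s i = n ∧ congR2 s i = n := by
  classical
  have nashT : ∀ (i : Fin n) (j : Fin 5), cb s true i j ≠ 0 →
      threshold n j < res0cong s i j := by
    intro i j h
    obtain ⟨k, hk⟩ := cb_exists s true i j h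
    exact (hnash i j k).2 hk
  have nashF : ∀ (i : Fin n) (j : Fin 5), cb s false i j ≠ 0 →
      res0cong s i j - 1 ≤ threshold n j := by
    intro i j h
    obtain ⟨k, hk⟩ := cb_exists s false i j h
    exact (hnash i j k).1 hk
  have nT0 : ∀ i : Fin n, cb s true i 0 ≠ 0 → 3*n < congR0 s i := fun i h => nashT i 0 h
  have nF0 : ∀ i : Fin n, cb s false i 0 ≠ 0 → congR0 s i - 1 ≤ 3*n := fun i h => nashF i 0 h
  have nT1 : ∀ i : Fin n, cb s true i 1 ≠ 0 → n - 1 < congR1 s i := fun i h => nashT i 1 h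
  have nF1 : ∀ i : Fin n, cb s false i 1 ≠ 0 → congR1 s i - 1 ≤ n - 1 := fun i h => nashF i 1 h
  have nT2 : ∀ i : Fin n, cb s true i 2 ≠ 0 → 3*n - 2 < congR0 s i := fun i h => nashT i 2 h
  have nF2 : ∀ i : Fin n, cb s false i 2 ≠ 0 → congR0 s i - 1 ≤ 3*n - 2 := fun i h => nashF i 2 h
  have nT3 : ∀ i : Fin n, cb s true i 3 ≠ 0 → n - 1 < congR2 s i := fun i h => nashT i 3 h
  have nF3 : ∀ i : Fin n, cb s false i 3 ≠ 0 → congR2 s i - 1 ≤ n - 1 := fun i h => nashF i 3 h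
  have nT4 : ∀ i : Fin n, cb s true i 4 ≠ 0 → 3*n - 1 < congR0 s i := fun i h => nashT i 4 h
  have nF4 : ∀ i : Fin n, cb s false i 4 ≠ 0 → congR0 s i - 1 ≤ 3*n - 1 := fun i h => nashF i 4 h
  have hs : ∀ (i : Fin n) (j : Fin 5), cb s false i j + cb s true i j = n := cb_add s
  have hle : ∀ (i : Fin n) (j : Fin 5), cb s true i j ≤ n := fun i j => by
    have := hs i j; omega
  -- Type-1 and type-3 analysis: congR1 = congR2 = n and matching true-counts.
  have key : ∀ i : Fin n, congR1 s i = n ∧ congR2 s i = n ∧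
      cb s true i 0 = cb s true i 1 ∧ cb s true i 2 = cb s true i 3 := by
    intro i
    have h0 := hs i 0; have h1 := hs i 1; have h2 := hs i 2; have h3 := hs i 3
    have e1 : congR1 s i = cb s true i 0 + cb s false i 1 := rfl
    have e2 : congR2 s i = cb s true i 2 + cb s false i 3 := rfl
    have a1 := nT1 i; have b1 := nF1 i; have a3 := nT3 i; have b3 := nF3 i
    omega
  obtain ⟨U, hU⟩ : ∃ U : Fin n → ℕ,
      ∀ i, U i = cb s true i 0 + cb s true i 2 + cb s true i 4 := ⟨_, fun _ => rfl⟩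
  have hN0u : ∀ i : Fin n, congR0 s i + U i = 3*n + U (i - 1) := by
    intro i
    have e : congR0 s i = cb s false i 0 + cb s false i 2 + cb s false i 4 +
        cb s true (i-1) 1 + cb s true (i-1) 3 + cb s true (i-1) 4 := rfl
    have k1 := (key (i-1)).2.2.1
    have k2 := (key (i-1)).2.2.2
    have h0 := hs i 0; have h2 := hs i 2; have h4 := hs i 4
    have u1 := hU i; have u2 := hU (i-1)
    omega
  have range : ∀ i : Fin n, 3*n - 1 ≤ congR0 s i ∧ congR0 s i ≤ 3*n + 1 := by
    intro i
    have h0 := nT0 i; have h0' := nF0 i; have h2 := nT2 i; have h2' := nF2 i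
    have h4 := nT4 i; have h4' := nF4 i
    have e := hN0u i
    have s0 := hs i 0; have s2 := hs i 2; have s4 := hs i 4
    have b0 := hle (i-1) 0; have b2 := hle (i-1) 2; have b4 := hle (i-1) 4
    have u1 := hU i; have u2 := hU (i-1)
    omega
  have step1 : ∀ i : Fin n, congR0 s i = 3*n + 1 →
      congR0 s (i-1) = 3*n + 1 ∧ U (i-1) = U i + 1 := by
    intro i hi
    have e := hN0u i
    have h2' := nF2 i; have h4' := nF4 i
    have s2 := hs i 2; have s4 := hs i 4
    have u1 := hU i
    have h0p := nT0 (i-1); have h4p := nT4 (i-1)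
    have s0p := hs (i-1) 0; have s2p := hs (i-1) 2; have s4p := hs (i-1) 4
    have u2 := hU (i-1)
    have hr := range (i-1)
    omega
  have noUp : ∀ i : Fin n, congR0 s i ≠ 3*n + 1 := by
    intro i0 hi0
    open Fin.NatCast Fin.CommRing in
    have hm : ∀ m : ℕ, congR0 s (i0 - (m : Fin n)) = 3*n + 1 ∧
        U (i0 - (m : Fin n)) = U i0 + m := by
      intro m
      induction m with
      | zero => constructor <;> simp [hi0]
      | succ m ih =>
        have hc : ((m+1 : ℕ) : Fin n) = (m : Fin n) + 1 := by push_cast; ring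
        rw [hc, sub_add_eq_sub_sub]
        obtain ⟨h1, h2⟩ := step1 _ ih.1
        exact ⟨h1, by omega⟩
    have hfin := (hm n).2
    open Fin.NatCast in rw [Fin.natCast_self, sub_zero] at hfin
    omega
  have hub : ∀ i : Fin n, congR0 s i ≤ 3*n := fun i => by
    have := range i; have := noUp i; omega
  have step2 : ∀ i : Fin n, congR0 s i = 3*n - 1 →
      congR0 s (i-1) = 3*n - 1 ∧ U i = U (i-1) + 1 := by
    intro i hi
    have e := hN0u i
    have h0 := nT0 i; have h4 := nT4 i
    have s0 := hs i 0; have s2 := hs i 2; have s4 := hs i 4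
    have u1 := hU i
    have h2p := nF2 (i-1)
    have s2p := hs (i-1) 2
    have u2 := hU (i-1)
    have hr := range (i-1)
    have hb := hub (i-1)
    omega
  have noDown : ∀ i : Fin n, congR0 s i ≠ 3*n - 1 := by
    intro i0 hi0
    open Fin.NatCast Fin.CommRing in
    have hm : ∀ m : ℕ, congR0 s (i0 - (m : Fin n)) = 3*n - 1 ∧
        U (i0 - (m : Fin n)) + m = U i0 := by
      intro m
      induction m with
      | zero => constructor <;> simp [hi0]
      | succ m ih =>
        have hc : ((m+1 : ℕ) : Fin n) = (m : Fin n) + 1 := by push_cast; ring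
        rw [hc, sub_add_eq_sub_sub]
        obtain ⟨h1, h2⟩ := step2 _ ih.1
        exact ⟨h1, by omega⟩
    have hfin := (hm n).2
    open Fin.NatCast in rw [Fin.natCast_self, sub_zero] at hfin
    omega
  intro i
  refine ⟨?_, (key i).1, (key i).2.1⟩
  have h1 := range i
  have h2 := noUp i
  have h3 := noDown i
  omega
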